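/- On a probability space, let S_0, S_1, …, S_{m−1} be independent, identically distributed integrable random N×N real symmetric matrices with common mean S̄ = E[S_t], such that all products appearing below are integrable. For 0 ≤ j ≤ m let Φ_{0:j−1} = S_{j−1} S_{j−2} ⋯ S_0 (with Φ_{0:−1} = I). Fix integers 0 ≤ l ≤ l' ≤ m and define the deterministic matrices M_0 = S̄^{l'−l} and M_j = E[S_0 M_{j−1} S_0] for j ≥ 1 (the expectation over a single fresh copy of the common distribution). Then E[ Φ_{0:l−1}ᵀ Φ_{0:l'−1} ] = M_l. -/

import Mathlib

open MeasureTheory ProbabilityTheory Matrix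

/-- The (entrywise) measurable space structure on real matrices. -/
instance matMS {N : ℕ} : MeasurableSpace (Matrix (Fin N) (Fin N) ℝ) :=
  (inferInstance : MeasurableSpace (Fin N → Fin N → ℝ))

/-- Entrywise expectation of a random matrix. -/
noncomputable def mExp {Ω : Type} [MeasurableSpace Ω] {N : ℕ} (μ : Measure Ω)
    (X : Ω → Matrix (Fin N) (Fin N) ℝ) : Matrix (Fin N) (Fin N) ℝ :=
  Matrix.of fun i j => ∫ ω, X ω i j ∂μ

/-- The left-continued matrix product `Φ_{a:b−1} = S_{b−1} S_{b−2} ⋯ S_a`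
(equal to `I` when `b ≤ a`). -/
def phiProd {Ω : Type} {N : ℕ} (S : ℕ → Ω → Matrix (Fin N) (Fin N) ℝ) (a b : ℕ) (ω : Ω) :
    Matrix (Fin N) (Fin N) ℝ :=
  (((List.range (b - a)).reverse).map (fun j => S (a + j) ω)).prod

namespace Stmt9Aux

variable {Ω : Type} [MeasurableSpace Ω] {N : ℕ}

lemma phiProd_le {S : ℕ → Ω → Matrix (Fin N) (Fin N) ℝ} {a b : ℕ} (h : b ≤ a) (ω : Ω) :
    phiProd S a b ω = 1 := by
  simp [phiProd, Nat.sub_eq_zero_of_le h]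

lemma phiProd_succ (S : ℕ → Ω → Matrix (Fin N) (Fin N) ℝ) {a b : ℕ} (h : a < b) (ω : Ω) :
    phiProd S a b ω = phiProd S (a + 1) b ω * S a ω := by
  obtain ⟨k, hk⟩ : ∃ k, b - a = k + 1 := ⟨b - a - 1, by omega⟩
  have hk' : b - (a + 1) = k := by omega
  unfold phiProd
  rw [hk, hk', List.range_succ_eq_map, List.reverse_cons, List.map_append, List.prod_append]
  simp only [List.map_cons, List.map_nil, List.prod_cons, List.prod_nil, mul_one]
  congr 1
  rw [List.map_reverse, List.map_map, List.map_reverse]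
  have : ((fun j => S (a + j) ω) ∘ Nat.succ) = fun j => S (a + 1 + j) ω := by
    funext j
    have h2 : a + Nat.succ j = a + 1 + j := by omega
    simp [Function.comp, h2]
  rw [this]

lemma measurable_matMul {α : Type*} [MeasurableSpace α] {f g : α → Matrix (Fin N) (Fin N) ℝ}
    (hf : Measurable f) (hg : Measurable g) : Measurable fun x => f x * g x := by
  apply measurable_pi_lambda
  intro i
  apply measurable_pi_lambda
  intro j
  simp only [Matrix.mul_apply]
  exact Finset.measurable_sum _ fun k _ =>
    ((measurable_pi_apply k).comp ((measurable_pi_apply i).comp hf)).mul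
      ((measurable_pi_apply j).comp ((measurable_pi_apply k).comp hg))

def Phifun (m N : ℕ) (a b : ℕ) (x : Fin m → Matrix (Fin N) (Fin N) ℝ) :
    Matrix (Fin N) (Fin N) ℝ :=
  (((List.range (b - a)).reverse).map
    (fun j => if h : a + j < m then x ⟨a + j, h⟩ else 1)).prod

lemma measurable_listprod {m : ℕ} (g : ℕ → (Fin m → Matrix (Fin N) (Fin N) ℝ) → Matrix (Fin N) (Fin N) ℝ)
    (hg : ∀ j, Measurable (g j)) :
    ∀ L : List ℕ, Measurable fun x => (L.map (fun j => g j x)).prod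
  | [] => by simpa using (measurable_const : Measurable fun _ : (Fin m → Matrix (Fin N) (Fin N) ℝ) => (1 : Matrix (Fin N) (Fin N) ℝ))
  | j :: L => by
      simp only [List.map_cons, List.prod_cons]
      exact measurable_matMul (hg j) (measurable_listprod g hg L)

lemma measurable_Phifun {m : ℕ} (a b : ℕ) : Measurable (Phifun m N a b) := by
  apply measurable_listprod
  intro j
  by_cases h : a + j < m
  · simpa [h] using (measurable_pi_apply (⟨a + j, h⟩ : Fin m))
  · simpa [h] using (measurable_const :
      Measurable fun _ : (Fin m → Matrix (Fin N) (Fin N) ℝ) => (1 : Matrix (Fin N) (Fin N) ℝ))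

def tailMap (m : ℕ) (S : ℕ → Ω → Matrix (Fin N) (Fin N) ℝ) (a : ℕ) (ω : Ω) :
    Fin m → Matrix (Fin N) (Fin N) ℝ :=
  fun τ => if a < (τ : ℕ) then S τ ω else 0

lemma Phifun_tail_eq {m : ℕ} (S : ℕ → Ω → Matrix (Fin N) (Fin N) ℝ) {a0 a b : ℕ}
    (h0 : a0 < a) (hb : b ≤ m) (ω : Ω) :
    Phifun m N a b (tailMap m S a0 ω) = phiProd S a b ω := by
  unfold Phifun phiProd tailMap
  congr 1
  apply List.map_congr_left
  intro j hj
  have hj' : j < b - a := by simpa using hj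
  rw [dif_pos (by omega : a + j < m)]
  rw [if_pos (by omega : a0 < a + j)]

lemma indep_tail {μ : Measure Ω} {m : ℕ} {S : ℕ → Ω → Matrix (Fin N) (Fin N) ℝ}
    (hIndep : iIndepFun (m := fun _ : Fin m => matMS) (fun τ : Fin m => S τ) μ)
    (hmeas : ∀ τ < m, Measurable (S τ)) (a : ℕ) (ham : a < m) :
    IndepFun (S a) (tailMap m S a) μ := by
  have hmeas' : ∀ τ : Fin m, Measurable ((fun τ : Fin m => S τ) τ) := fun τ => hmeas τ τ.2
  set A : Finset (Fin m) := {⟨a, ham⟩} with hA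
  set B : Finset (Fin m) := Finset.univ.filter (fun τ => a < (τ : ℕ)) with hB
  have hAB : Disjoint A B := by
    simp [hA, hB, Finset.disjoint_left]
  have h := hIndep.indepFun_finset A B hAB hmeas'
  have hφ : Measurable fun y : ↥A → Matrix (Fin N) (Fin N) ℝ =>
      y ⟨⟨a, ham⟩, by simp [hA]⟩ := measurable_pi_apply _
  have hψ : Measurable fun (y : ↥B → Matrix (Fin N) (Fin N) ℝ)
      (τ : Fin m) => if h : τ ∈ B then y ⟨τ, h⟩ else 0 := by
    apply measurable_pi_lambda
    intro τ
    by_cases h : τ ∈ B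
    · simpa [h] using (measurable_pi_apply (⟨τ, h⟩ : ↥B))
    · simpa [h] using (measurable_const :
        Measurable fun _ : (↥B → Matrix (Fin N) (Fin N) ℝ) =>
          (0 : Matrix (Fin N) (Fin N) ℝ))
  have h2 := h.comp hφ hψ
  have e1 : ((fun y : ↥A → Matrix (Fin N) (Fin N) ℝ =>
      y ⟨⟨a, ham⟩, by simp [hA]⟩) ∘ (fun ω (i : A) => S i ω)) = S a := rfl
  have e2 : ((fun (y : ↥B → Matrix (Fin N) (Fin N) ℝ)
      (τ : Fin m) => if h : τ ∈ B then y ⟨τ, h⟩ else 0) ∘ (fun ω (i : B) => S i ω))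
      = tailMap m S a := by
    funext ω τ
    by_cases h : τ ∈ B
    · have : a < (τ : ℕ) := by simpa [hB] using h
      simp [Function.comp, h, tailMap, this]
    · have : ¬ a < (τ : ℕ) := by simpa [hB] using h
      simp [Function.comp, h, tailMap, this]
  rwa [e1, e2] at h2

end Stmt9Aux

/-- recursive structure of `E[Φ_{0:l−1}ᵀ Φ_{0:l'−1}]`, Eq. (12).
For i.i.d. random symmetric matrices `S_0,…,S_{m−1}` with mean `S̄`, and the deterministic
recursion `M_0 = S̄^{l'−l}`, `M_j = E[S_0 M_{j−1} S_0]`, one has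
`E[Φ_{0:l−1}ᵀ Φ_{0:l'−1}] = M_l` for all `0 ≤ l ≤ l' ≤ m`. -/
theorem stmt9 {Ω : Type} [MeasurableSpace Ω] (μ : Measure Ω) [IsProbabilityMeasure μ]
    {N : ℕ} (hN : 0 < N) (m : ℕ) (S : ℕ → Ω → Matrix (Fin N) (Fin N) ℝ)
    (hmeas : ∀ τ < m, Measurable (S τ))
    (hsymm : ∀ τ < m, ∀ ω, (S τ ω).IsSymm)
    (hInt : ∀ (a b c d : ℕ → Fin N) (e f : ℕ → ℕ),
      Integrable (fun ω => ∏ τ ∈ Finset.range m,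
        (S τ ω (a τ) (b τ)) ^ (e τ) * (S τ ω (c τ) (d τ)) ^ (f τ)) μ)
    (hIndep : iIndepFun (m := fun _ : Fin m => matMS) (fun τ : Fin m => S τ) μ)
    (hid : ∀ τ < m, ∀ τ' < m, IdentDistrib (S τ) (S τ') μ μ)
    (Sbar : Matrix (Fin N) (Fin N) ℝ) (hSbar : ∀ τ < m, mExp μ (S τ) = Sbar)
    (l l' : ℕ) (hll' : l ≤ l') (hl'm : l' ≤ m)
    (M : ℕ → Matrix (Fin N) (Fin N) ℝ)
    (hM0 : M 0 = Sbar ^ (l' - l))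
    (hMrec : ∀ j, M (j + 1) = mExp μ (fun ω => S 0 ω * M j * S 0 ω)) :
    mExp μ (fun ω => (phiProd S 0 l ω)ᵀ * phiProd S 0 l' ω) = M l := by
  classical
  -- integrability of a single entry
  have int_one : ∀ τ, τ < m → ∀ i j : Fin N, Integrable (fun ω => S τ ω i j) μ := by
    intro τ hτ i j
    have h := hInt (fun _ => i) (fun _ => j) (fun _ => i) (fun _ => j)
      (fun t => if t = τ then 1 else 0) (fun _ => 0)
    refine h.congr (Filter.Eventually.of_forall fun ω => ?_)
    simp only
    rw [Finset.prod_eq_single_of_mem τ (Finset.mem_range.2 hτ)]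
    · simp
    · intro t _ ht
      simp [ht]
  -- integrability of a product of two entries of the same matrix
  have int_two : ∀ τ, τ < m → ∀ i p q j : Fin N,
      Integrable (fun ω => S τ ω i p * S τ ω q j) μ := by
    intro τ hτ i p q j
    have h := hInt (fun _ => i) (fun _ => p) (fun _ => q) (fun _ => j)
      (fun t => if t = τ then 1 else 0) (fun t => if t = τ then 1 else 0)
    refine h.congr (Filter.Eventually.of_forall fun ω => ?_)
    simp only
    rw [Finset.prod_eq_single_of_mem τ (Finset.mem_range.2 hτ)]
    · simp
    · intro t _ ht
      simp [ht]
  have hIT : ∀ a, a < m → IndepFun (S a) (Stmt9Aux.tailMap m S a) μ :=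
    fun a ha => Stmt9Aux.indep_tail hIndep hmeas a ha
  -- generic independence of an entry of a `Phifun`-expressible tail functional from S a
  have hindGen : ∀ (a : ℕ), a < m → ∀ (F : (Fin m → Matrix (Fin N) (Fin N) ℝ) → ℝ)
      (hF : Measurable F) (φ : Matrix (Fin N) (Fin N) ℝ → ℝ) (hφ : Measurable φ),
      IndepFun (fun ω => F (Stmt9Aux.tailMap m S a ω)) (fun ω => φ (S a ω)) μ := by
    intro a ha F hF φ hφ
    exact ((hIT a ha).comp hφ hF).symm
  -- Lemma A : expectation of a plain product
  have lemA : ∀ n : ℕ, ∀ a : ℕ, a + n ≤ m →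
      (∀ i j : Fin N, Integrable (fun ω => phiProd S a (a + n) ω i j) μ) ∧
      mExp μ (phiProd S a (a + n)) = Sbar ^ n := by
    intro n
    induction n with
    | zero =>
      intro a _
      have hφ : ∀ ω : Ω, phiProd S a (a + 0) ω = 1 :=
        fun ω => Stmt9Aux.phiProd_le (by omega) ω
      constructor
      · intro i j
        simp only [hφ]
        exact integrable_const _
      · ext i j
        show (∫ ω, phiProd S a (a + 0) ω i j ∂μ) = (Sbar ^ 0) i j
        calc (∫ ω, phiProd S a (a + 0) ω i j ∂μ)
            = ∫ _ω, (1 : Matrix (Fin N) (Fin N) ℝ) i j ∂μ := by simp only [hφ]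
          _ = (1 : Matrix (Fin N) (Fin N) ℝ) i j := by simp
          _ = (Sbar ^ 0) i j := by rw [pow_zero]
    | succ n ih =>
      intro a ha
      have ham : a < m := by omega
      obtain ⟨ih1, ih2⟩ := ih (a + 1) (by omega)
      have he : a + 1 + n = a + (n + 1) := by omega
      rw [he] at ih1 ih2
      have hsucc : ∀ ω, phiProd S a (a + (n + 1)) ω
          = phiProd S (a + 1) (a + (n + 1)) ω * S a ω :=
        fun ω => Stmt9Aux.phiProd_succ S (by omega) ω
      have hindE : ∀ (i k k' j' : Fin N),
          IndepFun (fun ω => phiProd S (a + 1) (a + (n + 1)) ω i k)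
            (fun ω => S a ω k' j') μ := by
        intro i k k' j'
        have hc := hindGen a ham
          (fun x => Stmt9Aux.Phifun m N (a + 1) (a + (n + 1)) x i k)
          (((measurable_pi_apply k).comp ((measurable_pi_apply i).comp
            (Stmt9Aux.measurable_Phifun _ _))))
          (fun x => x k' j')
          ((measurable_pi_apply j').comp (measurable_pi_apply k'))
        have e2 : (fun ω => Stmt9Aux.Phifun m N (a + 1) (a + (n + 1))
            (Stmt9Aux.tailMap m S a ω) i k)
            = fun ω => phiProd S (a + 1) (a + (n + 1)) ω i k := by
          funext ω
          rw [Stmt9Aux.Phifun_tail_eq S (Nat.lt_succ_self a) (by omega) ω]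
        rwa [e2] at hc
      have hterm : ∀ (i k j' : Fin N),
          Integrable (fun ω => phiProd S (a + 1) (a + (n + 1)) ω i k * S a ω k j') μ :=
        fun i k j' => (hindE i k k j').integrable_mul (ih1 i k) (int_one a ham k j')
      constructor
      · intro i j
        have e : (fun ω => phiProd S a (a + (n + 1)) ω i j)
            = fun ω => ∑ k, phiProd S (a + 1) (a + (n + 1)) ω i k * S a ω k j := by
          funext ω
          rw [hsucc ω, Matrix.mul_apply]
        rw [e]
        exact integrable_finset_sum _ fun k _ => hterm i k j
      · ext i j
        show (∫ ω, phiProd S a (a + (n + 1)) ω i j ∂μ) = (Sbar ^ (n + 1)) i j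
        calc (∫ ω, phiProd S a (a + (n + 1)) ω i j ∂μ)
            = ∫ ω, ∑ k, phiProd S (a + 1) (a + (n + 1)) ω i k * S a ω k j ∂μ := by
              simp only [hsucc, Matrix.mul_apply]
          _ = ∑ k, ∫ ω, phiProd S (a + 1) (a + (n + 1)) ω i k * S a ω k j ∂μ :=
              integral_finset_sum _ fun k _ => hterm i k j
          _ = ∑ k, (∫ ω, phiProd S (a + 1) (a + (n + 1)) ω i k ∂μ) * ∫ ω, S a ω k j ∂μ :=
              Finset.sum_congr rfl fun k _ =>
                (hindE i k k j).integral_fun_mul_eq_mul_integral (ih1 i k).aestronglyMeasurable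
                    (int_one a ham k j).aestronglyMeasurable
          _ = ∑ k, (Sbar ^ n) i k * Sbar k j := by
              refine Finset.sum_congr rfl fun k _ => ?_
              rw [show (∫ ω, phiProd S (a + 1) (a + (n + 1)) ω i k ∂μ) = (Sbar ^ n) i k from
                    by rw [← ih2]; rfl,
                  show (∫ ω, S a ω k j ∂μ) = Sbar k j from by rw [← hSbar a ham]; rfl]
          _ = (Sbar ^ (n + 1)) i j := by rw [pow_succ, Matrix.mul_apply]
  -- Lemma B : the main induction
  have lemB : ∀ k : ℕ, k ≤ l →
      (∀ i j : Fin N, Integrable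
        (fun ω => ((phiProd S (l - k) l ω)ᵀ * phiProd S (l - k) l' ω) i j) μ) ∧
      mExp μ (fun ω => (phiProd S (l - k) l ω)ᵀ * phiProd S (l - k) l' ω) = M k := by
    intro k
    induction k with
    | zero =>
      intro _
      have e : ∀ ω, (phiProd S (l - 0) l ω)ᵀ * phiProd S (l - 0) l' ω
          = phiProd S l (l + (l' - l)) ω := by
        intro ω
        rw [show l - 0 = l from rfl, Stmt9Aux.phiProd_le (le_refl l) ω, Matrix.transpose_one,
          one_mul, show l + (l' - l) = l' from by omega]
      obtain ⟨h1, h2⟩ := lemA (l' - l) l (by omega)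
      constructor
      · intro i j
        simp only [e]
        exact h1 i j
      · have e' : (fun ω => (phiProd S (l - 0) l ω)ᵀ * phiProd S (l - 0) l' ω)
            = phiProd S l (l + (l' - l)) := funext e
        rw [e', h2, hM0]
    | succ k ih =>
      intro hkl
      obtain ⟨ih1, ih2⟩ := ih (by omega)
      set a := l - (k + 1) with hadef
      have ha1 : l - k = a + 1 := by omega
      have ham : a < m := by omega
      have h0m : 0 < m := by omega
      rw [ha1] at ih1 ih2
      -- pointwise sandwich identity
      have hpt : ∀ ω, ((phiProd S a l ω)ᵀ * phiProd S a l' ω)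
          = S a ω * ((phiProd S (a + 1) l ω)ᵀ * phiProd S (a + 1) l' ω) * S a ω := by
        intro ω
        rw [Stmt9Aux.phiProd_succ S (show a < l by omega) ω,
          Stmt9Aux.phiProd_succ S (show a < l' by omega) ω,
          Matrix.transpose_mul, (hsymm a (by omega) ω)]
        simp only [Matrix.mul_assoc]
      -- independence of entries of the inner product from entry-pairs of S a
      have hindB : ∀ (p q i j : Fin N),
          IndepFun (fun ω => ((phiProd S (a + 1) l ω)ᵀ * phiProd S (a + 1) l' ω) p q)
            (fun ω => S a ω i p * S a ω q j) μ := by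
        intro p q i j
        have hFmeas : Measurable (fun x : Fin m → Matrix (Fin N) (Fin N) ℝ =>
            ((Stmt9Aux.Phifun m N (a + 1) l x)ᵀ * Stmt9Aux.Phifun m N (a + 1) l' x) p q) := by
          simp only [Matrix.mul_apply, Matrix.transpose_apply]
          exact Finset.measurable_sum _ fun r _ =>
            ((measurable_pi_apply p).comp ((measurable_pi_apply r).comp
              (Stmt9Aux.measurable_Phifun _ _))).mul
            ((measurable_pi_apply q).comp ((measurable_pi_apply r).comp
              (Stmt9Aux.measurable_Phifun _ _)))
        have hφmeas : Measurable (fun x : Matrix (Fin N) (Fin N) ℝ => x i p * x q j) :=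
          ((measurable_pi_apply p).comp (measurable_pi_apply i)).fun_mul
            ((measurable_pi_apply j).comp (measurable_pi_apply q))
        have hc := hindGen a ham _ hFmeas _ hφmeas
        have e2 : (fun ω => ((Stmt9Aux.Phifun m N (a + 1) l (Stmt9Aux.tailMap m S a ω))ᵀ *
              Stmt9Aux.Phifun m N (a + 1) l' (Stmt9Aux.tailMap m S a ω)) p q)
            = fun ω => ((phiProd S (a + 1) l ω)ᵀ * phiProd S (a + 1) l' ω) p q := by
          funext ω
          rw [Stmt9Aux.Phifun_tail_eq S (Nat.lt_succ_self a) (by omega) ω,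
            Stmt9Aux.Phifun_tail_eq S (Nat.lt_succ_self a) (by omega) ω]
        rwa [e2] at hc
      -- each summand is integrable
      have hterm : ∀ (p q i j : Fin N),
          Integrable (fun ω =>
            ((phiProd S (a + 1) l ω)ᵀ * phiProd S (a + 1) l' ω) p q *
              (S a ω i p * S a ω q j)) μ :=
        fun p q i j => (hindB p q i j).integrable_mul (ih1 p q) (int_two a ham i p q j)
      -- entrywise expansion of the sandwich
      have hexp : ∀ (i j : Fin N) (ω : Ω),
          (S a ω * ((phiProd S (a + 1) l ω)ᵀ * phiProd S (a + 1) l' ω) * S a ω) i j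
          = ∑ q, ∑ p, ((phiProd S (a + 1) l ω)ᵀ * phiProd S (a + 1) l' ω) p q *
              (S a ω i p * S a ω q j) := by
        intro i j ω
        simp only [Matrix.mul_apply, Finset.sum_mul, Finset.mul_sum]
        refine Finset.sum_congr rfl fun q _ => Finset.sum_congr rfl fun p _ =>
          Finset.sum_congr rfl fun r _ => by ring
      constructor
      · intro i j
        have e : (fun ω => ((phiProd S a l ω)ᵀ * phiProd S a l' ω) i j)
            = fun ω => ∑ q, ∑ p, ((phiProd S (a + 1) l ω)ᵀ * phiProd S (a + 1) l' ω) p q *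
                (S a ω i p * S a ω q j) := by
          funext ω
          rw [hpt ω, hexp i j ω]
        rw [e]
        exact integrable_finset_sum _ fun q _ => integrable_finset_sum _ fun p _ =>
          hterm p q i j
      · ext i j
        show (∫ ω, ((phiProd S a l ω)ᵀ * phiProd S a l' ω) i j ∂μ) = M (k + 1) i j
        have hid2 : ∀ (i p q j : Fin N),
            (∫ ω, S a ω i p * S a ω q j ∂μ) = ∫ ω, S 0 ω i p * S 0 ω q j ∂μ := by
          intro i p q j
          have hu : Measurable (fun x : Matrix (Fin N) (Fin N) ℝ => x i p * x q j) :=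
            ((measurable_pi_apply p).comp (measurable_pi_apply i)).fun_mul
              ((measurable_pi_apply j).comp (measurable_pi_apply q))
          exact ((hid a ham 0 h0m).comp hu).integral_eq
        have hRHS : M (k + 1) i j = ∑ q, ∑ p, M k p q * ∫ ω, S 0 ω i p * S 0 ω q j ∂μ := by
          rw [hMrec k]
          show (∫ ω, (S 0 ω * M k * S 0 ω) i j ∂μ) = _
          have hexp0 : ∀ ω : Ω, (S 0 ω * M k * S 0 ω) i j
              = ∑ q, ∑ p, M k p q * (S 0 ω i p * S 0 ω q j) := by
            intro ω
            simp only [Matrix.mul_apply, Finset.sum_mul, Finset.mul_sum]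
            refine Finset.sum_congr rfl fun q _ => Finset.sum_congr rfl fun p _ => by ring
          calc (∫ ω, (S 0 ω * M k * S 0 ω) i j ∂μ)
              = ∫ ω, ∑ q, ∑ p, M k p q * (S 0 ω i p * S 0 ω q j) ∂μ := by
                simp only [hexp0]
            _ = ∑ q, ∑ p, ∫ ω, M k p q * (S 0 ω i p * S 0 ω q j) ∂μ := by
                rw [integral_finset_sum _ fun q _ => integrable_finset_sum _ fun p _ =>
                  (int_two 0 h0m i p q j).const_mul (M k p q)]
                exact Finset.sum_congr rfl fun q _ => integral_finset_sum _ fun p _ =>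
                  (int_two 0 h0m i p q j).const_mul (M k p q)
            _ = ∑ q, ∑ p, M k p q * ∫ ω, S 0 ω i p * S 0 ω q j ∂μ :=
                Finset.sum_congr rfl fun q _ => Finset.sum_congr rfl fun p _ =>
                  integral_const_mul _ _
        rw [hRHS]
        calc (∫ ω, ((phiProd S a l ω)ᵀ * phiProd S a l' ω) i j ∂μ)
            = ∫ ω, ∑ q, ∑ p, ((phiProd S (a + 1) l ω)ᵀ * phiProd S (a + 1) l' ω) p q *
                (S a ω i p * S a ω q j) ∂μ := by
              simp only [hpt, hexp]
          _ = ∑ q, ∑ p, ∫ ω, ((phiProd S (a + 1) l ω)ᵀ * phiProd S (a + 1) l' ω) p q *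
                (S a ω i p * S a ω q j) ∂μ := by
              rw [integral_finset_sum _ fun q _ => integrable_finset_sum _ fun p _ =>
                hterm p q i j]
              exact Finset.sum_congr rfl fun q _ => integral_finset_sum _ fun p _ =>
                hterm p q i j
          _ = ∑ q, ∑ p, (∫ ω, ((phiProd S (a + 1) l ω)ᵀ * phiProd S (a + 1) l' ω) p q ∂μ) *
                ∫ ω, S a ω i p * S a ω q j ∂μ :=
              Finset.sum_congr rfl fun q _ => Finset.sum_congr rfl fun p _ =>
                (hindB p q i j).integral_fun_mul_eq_mul_integral (ih1 p q).aestronglyMeasurable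
                    (int_two a ham i p q j).aestronglyMeasurable
          _ = ∑ q, ∑ p, M k p q * ∫ ω, S 0 ω i p * S 0 ω q j ∂μ := by
              refine Finset.sum_congr rfl fun q _ => Finset.sum_congr rfl fun p _ => ?_
              rw [hid2 i p q j,
                show (∫ ω, ((phiProd S (a + 1) l ω)ᵀ * phiProd S (a + 1) l' ω) p q ∂μ)
                  = M k p q from by rw [← ih2]; rfl]
  have hfin := (lemB l (le_refl l)).2
  rwa [Nat.sub_self] at hfin
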